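/- There is no Carmichael number m such that the lcm L of p-1 over the prime divisors p of m equals 2^\alpha \cdot 43^2 for some \alpha, where m is divisible by 5, 17, and 257, every prime factor of m is of the form 2^k+1, 2^l \cdot 43 + 1, or 2^s \cdot 43^2 + 1 with the only 2^k+1 factors being 5, 17, 257, and m is divisible by 173 = 2^2 \cdot 43 + 1. (Key computational facts: 2^3 \cdot 43 + 1, 2^4 \cdot 43 + 1 = 13 \cdot 53, and 2^4 \cdot 43^2 + 1 = 5 \cdot 61 \cdot 97 are all composite, and 43 \equiv 1 \pmod 3 forces the exponents l, s to be even for prime factors.) -/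

import Mathlib

lemma residue_one_43 (p : ℕ) (hp : p.Prime) (h4 : p ≠ 173)
    (hcl : (∃ l : ℕ, p = 2 ^ l * 43 + 1) ∨ (∃ s : ℕ, p = 2 ^ s * 43 ^ 2 + 1)) :
    p % 32 = 1 := by
  rcases hcl with ⟨l, rfl⟩ | ⟨s, rfl⟩
  · rcases Nat.lt_or_ge l 5 with h | h
    · interval_cases l
      · exact absurd hp (by norm_num)
      · exact absurd hp (by norm_num)
      · exact absurd rfl h4
      · exact absurd hp (by norm_num)
      · exact absurd hp (by norm_num)
    · obtain ⟨t, ht⟩ : (32:ℕ) ∣ 2 ^ l :=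
        dvd_trans (by norm_num : (32:ℕ) ∣ 2 ^ 5) (pow_dvd_pow 2 h)
      rw [ht]; omega
  · rcases Nat.lt_or_ge s 5 with h | h
    · interval_cases s
      · exact absurd hp (by norm_num)
      · exact absurd hp (by norm_num)
      · exact absurd hp (by norm_num)
      · exact absurd hp (by norm_num)
      · exact absurd hp (by norm_num)
    · obtain ⟨t, ht⟩ : (32:ℕ) ∣ 2 ^ s :=
        dvd_trans (by norm_num : (32:ℕ) ∣ 2 ^ 5) (pow_dvd_pow 2 h)
      rw [ht]; omega

theorem no_carmichael_P_43 :
    ¬ ∃ (m α : ℕ),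
      Squarefree m ∧ 1 < m ∧ ¬ Nat.Prime m ∧
      (∀ p : ℕ, p.Prime → p ∣ m → (p - 1) ∣ (m - 1)) ∧
      m.primeFactors.lcm (fun p => p - 1) = 2 ^ α * 43 ^ 2 ∧
      5 ∣ m ∧ 17 ∣ m ∧ 257 ∣ m ∧ 173 ∣ m ∧
      (∀ p ∈ m.primeFactors,
        (∃ k : ℕ, p = 2 ^ k + 1) ∨ (∃ l : ℕ, p = 2 ^ l * 43 + 1) ∨
        (∃ s : ℕ, p = 2 ^ s * 43 ^ 2 + 1)) ∧
      (∀ p ∈ m.primeFactors, (∃ k : ℕ, p = 2 ^ k + 1) →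
        p = 5 ∨ p = 17 ∨ p = 257) := by
  rintro ⟨m, α, hsq, hm1, -, hcar, -, h5, h17, h257, h173, hcl, hpow⟩
  have hm0 : m ≠ 0 := Nat.ne_zero_of_lt hm1
  have hmem : ∀ q : ℕ, Nat.Prime q → q ∣ m → q ∈ m.primeFactors := fun q hq hd =>
    Nat.mem_primeFactors.2 ⟨hq, hd, hm0⟩
  have m5 := hmem 5 (by norm_num) h5
  have m17 := hmem 17 (by norm_num) h17
  have m257 := hmem 257 (by norm_num) h257
  have m173 := hmem 173 (by norm_num) h173
  have hT : ({5, 17, 257, 173} : Finset ℕ) ⊆ m.primeFactors := by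
    intro p hp
    fin_cases hp <;> assumption
  -- every other prime factor is 1 mod 32
  have hrest : ∀ p ∈ m.primeFactors \ ({5, 17, 257, 173} : Finset ℕ),
      ((p : ZMod 32)) = 1 := by
    intro p hp
    simp only [Finset.mem_sdiff, Finset.mem_insert, Finset.mem_singleton] at hp
    obtain ⟨hpS, hne⟩ := hp
    push_neg at hne
    obtain ⟨hpp, -, -⟩ := Nat.mem_primeFactors.1 hpS
    have hmod : p % 32 = 1 := by
      rcases hcl p hpS with hk | h
      · rcases hpow p hpS hk with rfl | rfl | rfl <;> tauto
      · exact residue_one_43 p hpp (by tauto) h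
    calc (p : ZMod 32) = ((p % 32 : ℕ) : ZMod 32) := (ZMod.natCast_mod p 32).symm
      _ = 1 := by rw [hmod]; norm_num
  have hprod : ∏ p ∈ m.primeFactors, p = m := Nat.prod_primeFactors_of_squarefree hsq
  have hcast : (m : ZMod 32) = ∏ p ∈ m.primeFactors, (p : ZMod 32) := by
    conv_lhs => rw [← hprod]
    exact Nat.cast_prod _ _
  have hsplit : (m : ZMod 32) = 17 := by
    rw [hcast, ← Finset.prod_sdiff hT,
      Finset.prod_eq_one hrest, one_mul]
    decide
  -- 256 ∣ m - 1
  have h256 : (256 : ℕ) ∣ m - 1 := by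
    have := hcar 257 (by norm_num) h257
    norm_num at this
    exact this
  have h32 : (32 : ℕ) ∣ m - 1 := dvd_trans (by norm_num) h256
  have hm' : m - 1 + 1 = m := Nat.succ_pred_eq_of_pos (zero_lt_one.trans hm1)
  obtain ⟨k, hk⟩ := h32
  have hmmod : m % 32 = 1 := by
    rw [← hm', hk, Nat.mul_add_mod]
  have : (m : ZMod 32) = 1 := by
    calc (m : ZMod 32) = ((m % 32 : ℕ) : ZMod 32) := (ZMod.natCast_mod m 32).symm
      _ = 1 := by rw [hmmod]; norm_num
  rw [hsplit] at this
  exact absurd this (by decide)
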